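/- Let G be a locally compact Hausdorff unimodular topological group with Haar measure μ, and let K be a compact open subgroup of G equipped with its Haar probability measure dk. Then for every m ∈ G and every function f : G → ℂ that is integrable on the double coset KmK, one has ∫_{KmK} f(x) dμ(x) = μ(KmK) · ∫_K ∫_K f(k₁ m k₂) dk₁ dk₂. -/

import Mathlib

open MeasureTheory Set
open scoped Pointwise ENNReal NNReal

/-- Let `G` be a locally compact Hausdorff unimodular topological group with Haar measure `μ`,
and `K` a compact open subgroup equipped with its Haar probability measure `ν`.  Then for every
`m ∈ G` and every `f : G → ℂ` integrable on the double coset `KmK`, one has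
`∫_{KmK} f dμ = μ(KmK) · ∫_K ∫_K f(k₁ m k₂) dk₁ dk₂`. -/
theorem integral_double_coset
    {G : Type*} [Group G] [TopologicalSpace G] [IsTopologicalGroup G]
    [T2Space G] [LocallyCompactSpace G]
    [MeasurableSpace G] [BorelSpace G]
    (μ : Measure G) [μ.IsHaarMeasure] [μ.IsMulRightInvariant]
    (K : Subgroup G) (hKcompact : IsCompact (K : Set G)) (hKopen : IsOpen (K : Set G))
    (ν : Measure K) [ν.IsHaarMeasure] [IsProbabilityMeasure ν]
    (m : G) (f : G → ℂ)
    (hf : IntegrableOn f {x : G | ∃ k₁ ∈ K, ∃ k₂ ∈ K, x = k₁ * m * k₂} μ) :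
    ∫ x in {x : G | ∃ k₁ ∈ K, ∃ k₂ ∈ K, x = k₁ * m * k₂}, f x ∂μ
      = ((μ {x : G | ∃ k₁ ∈ K, ∃ k₂ ∈ K, x = k₁ * m * k₂}).toReal : ℂ)
          * ∫ k₁ : K, ∫ k₂ : K, f ((k₁ : G) * m * (k₂ : G)) ∂ν ∂ν := by
  classical
  set S : Set G := {x : G | ∃ k₁ ∈ K, ∃ k₂ ∈ K, x = k₁ * m * k₂} with hS_def
  have hKm : MeasurableSet (K : Set G) := hKopen.measurableSet
  haveI : BorelSpace K := Subtype.borelSpace (K : Set G)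
  have hKemb : MeasurableEmbedding ((↑) : K → G) := MeasurableEmbedding.subtype_coe hKm
  haveI : CompactSpace K := isCompact_iff_compactSpace.mp hKcompact
  have hK0 : μ (K : Set G) ≠ 0 := hKopen.measure_ne_zero μ ⟨1, K.one_mem⟩
  have hKtop : μ (K : Set G) ≠ ⊤ := hKcompact.measure_lt_top.ne
  -- the comap measure on K
  have hcomap_univ : μ.comap ((↑) : K → G) univ = μ (K : Set G) := by
    rw [hKemb.comap_apply, image_univ]
    congr 1
    exact Subtype.range_coe
  haveI : IsFiniteMeasure (μ.comap ((↑) : K → G)) :=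
    ⟨by rw [hcomap_univ]; exact hKcompact.measure_lt_top⟩
  haveI : (μ.comap ((↑) : K → G)).IsMulLeftInvariant := by
    constructor
    intro g
    ext s hs
    rw [Measure.map_apply (measurable_const_mul g) hs, hKemb.comap_apply, hKemb.comap_apply]
    have himg : ((↑) : K → G) '' ((g * ·) ⁻¹' s) = ((g : G) * ·) ⁻¹' (((↑) : K → G) '' s) := by
      ext y
      constructor
      · rintro ⟨x, hx, rfl⟩
        exact ⟨g * x, hx, rfl⟩
      · rintro ⟨x, hx, hxy⟩
        refine ⟨g⁻¹ * x, ?_, ?_⟩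
        · show g * (g⁻¹ * x) ∈ s
          rwa [mul_inv_cancel_left]
        · push_cast
          rw [hxy, inv_mul_cancel_left]
    rw [himg, measure_preimage_mul]
  -- uniqueness of Haar measure on the compact group K
  have hν : ν = (μ (K : Set G))⁻¹ • μ.comap ((↑) : K → G) := by
    have h1 := Measure.isMulInvariant_eq_smul_of_compactSpace (μ.comap ((↑) : K → G)) ν
    have h2 : μ (K : Set G)
        = ((Measure.haarScalarFactor (μ.comap ((↑) : K → G)) ν : ℝ≥0) : ℝ≥0∞) := by
      have h4 := congrArg (fun ρ : Measure K => ρ univ) h1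
      rw [hcomap_univ, Measure.smul_apply, measure_univ, ENNReal.smul_def, smul_eq_mul,
        mul_one] at h4
      exact h4
    rw [h1, ENNReal.smul_def, ← h2, smul_smul, ENNReal.inv_mul_cancel hK0 hKtop, one_smul]
  -- conversion of ν-integrals into μ-integrals
  have hconv : ∀ φ : G → ℂ,
      ∫ k : K, φ (k : G) ∂ν = (μ (K : Set G)).toReal⁻¹ • ∫ x in (K : Set G), φ x ∂μ := by
    intro φ
    rw [hν, integral_smul_measure, ENNReal.toReal_inv]
    congr 1
    have h3 : ∫ x in (K : Set G), φ x ∂μ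
        = ∫ y, φ y ∂((μ.comap ((↑) : K → G)).map ((↑) : K → G)) := by
      rw [hKemb.map_comap, Subtype.range_coe]
    rw [h3, hKemb.integral_map]
  -- coset machinery
  have coset_eq : ∀ g h : G, g ∈ h • (K : Set G) → g • (K : Set G) = h • (K : Set G) := by
    intro g h hg
    obtain ⟨y, hy, rfl⟩ := hg
    show (h * y) • (K : Set G) = h • (K : Set G)
    rw [mul_smul, smul_coe_set hy]
  have hSsub : ∀ a : G, a ∈ K → (a * m) • (K : Set G) ⊆ S := by
    rintro a ha x ⟨y, hy, rfl⟩
    exact ⟨a, ha, y, hy, rfl⟩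
  have hmemS : ∀ x ∈ S, ∃ a, a ∈ K ∧ x ∈ (a * m) • (K : Set G) := by
    rintro x ⟨k₁, h₁, k₂, h₂, rfl⟩
    exact ⟨k₁, h₁, ⟨k₂, h₂, rfl⟩⟩
  have hSeq : S ⊆ ⋃ a : K, ((a : G) * m) • (K : Set G) := by
    intro x hx
    obtain ⟨a, ha, hmem⟩ := hmemS x hx
    exact mem_iUnion.mpr ⟨⟨a, ha⟩, hmem⟩
  have hScompact : IsCompact S := by
    have himg : S = (fun p : G × G => p.1 * m * p.2) '' ((K : Set G) ×ˢ (K : Set G)) := by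
      ext x
      constructor
      · rintro ⟨k₁, h₁, k₂, h₂, rfl⟩
        exact ⟨(k₁, k₂), ⟨h₁, h₂⟩, rfl⟩
      · rintro ⟨⟨k₁, k₂⟩, ⟨h₁, h₂⟩, rfl⟩
        exact ⟨k₁, h₁, k₂, h₂, rfl⟩
    rw [himg]
    exact (hKcompact.prod hKcompact).image (by fun_prop)
  obtain ⟨t, ht⟩ := hScompact.elim_finite_subcover
    (fun a : K => ((a : G) * m) • (K : Set G)) (fun a => hKopen.smul _) hSeq
  set C : Finset (Set G) := t.image (fun a : K => ((a : G) * m) • (K : Set G)) with hC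
  have hCmem : ∀ c ∈ C, ∃ a, a ∈ K ∧ c = (a * m) • (K : Set G) := by
    intro c hc
    obtain ⟨a, _, rfl⟩ := Finset.mem_image.mp hc
    exact ⟨a, a.2, rfl⟩
  have hCmeas : ∀ c ∈ C, MeasurableSet c := fun c hc => by
    obtain ⟨a, _, rfl⟩ := hCmem c hc
    exact (hKopen.smul _).measurableSet
  have hCsub : ∀ c ∈ C, c ⊆ S := fun c hc => by
    obtain ⟨a, ha, rfl⟩ := hCmem c hc
    exact hSsub a ha
  have hCcover : ∀ x ∈ S, ∃ c ∈ C, x ∈ c := by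
    intro x hx
    obtain ⟨a, ha, hmem⟩ := hmemS x hx
    have haS : a * m ∈ S := ⟨a, ha, 1, K.one_mem, (mul_one _).symm⟩
    obtain ⟨b, hbt, hmem'⟩ := mem_iUnion₂.mp (ht haS)
    refine ⟨((b : G) * m) • (K : Set G), Finset.mem_image.mpr ⟨b, hbt, rfl⟩, ?_⟩
    rw [← coset_eq (a * m) ((b : G) * m) hmem']
    exact hmem
  have hCdisj : (C : Set (Set G)).Pairwise (Function.onFun Disjoint id) := by
    intro c hc c' hc' hne
    simp only [Function.onFun, id]
    rw [Set.disjoint_left]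
    intro x hx hx'
    obtain ⟨a, ha, rfl⟩ := hCmem c (Finset.mem_coe.mp hc)
    obtain ⟨a', ha', rfl⟩ := hCmem c' (Finset.mem_coe.mp hc')
    exact hne ((coset_eq x _ hx).symm.trans (coset_eq x _ hx'))
  -- the partition of K according to which coset x * m falls in
  set A : Set G → Set G := fun c => (K : Set G) ∩ (· * m) ⁻¹' c with hA
  have hAmeas : ∀ c ∈ C, MeasurableSet (A c) := fun c hc =>
    hKm.inter (measurable_mul_const m (hCmeas c hc))
  have hAsub : ∀ c, A c ⊆ (K : Set G) := fun c => inter_subset_left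
  have hKdecomp : (K : Set G) = ⋃ c ∈ C, A c := by
    apply Subset.antisymm
    · intro x hx
      have hxm : x * m ∈ S := ⟨x, hx, 1, K.one_mem, (mul_one _).symm⟩
      obtain ⟨c, hc, hxc⟩ := hCcover _ hxm
      exact mem_iUnion₂.mpr ⟨c, hc, hx, hxc⟩
    · exact iUnion₂_subset fun c _ => inter_subset_left
  have hAdisj : (C : Set (Set G)).Pairwise (Function.onFun Disjoint A) := by
    intro c hc c' hc' hne
    have hd := hCdisj hc hc' hne
    simp only [Function.onFun, id] at hd ⊢
    rw [Set.disjoint_left] at hd ⊢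
    intro x hx hx'
    exact hd hx.2 hx'.2
  -- all pieces of the partition have the same measure
  have hAeq : ∀ c ∈ C, ∀ c' ∈ C, μ (A c) = μ (A c') := by
    intro c hc c' hc'
    obtain ⟨a, ha, rfl⟩ := hCmem c hc
    obtain ⟨a', ha', rfl⟩ := hCmem c' hc'
    have hg : a' * a⁻¹ ∈ K := K.mul_mem ha' (K.inv_mem ha)
    have hpre : ((a' * a⁻¹) * ·) ⁻¹' (A ((a' * m) • (K : Set G)))
        = A ((a * m) • (K : Set G)) := by
      ext x
      have key : (a' * m)⁻¹ * (a' * a⁻¹ * x * m) = (a * m)⁻¹ * (x * m) := by group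
      simp only [hA, mem_preimage, mem_inter_iff, mem_smul_set_iff_inv_smul_mem, smul_eq_mul,
        SetLike.mem_coe, key]
      rw [K.mul_mem_cancel_left hg]
    calc μ (A ((a * m) • (K : Set G)))
        = μ (((a' * a⁻¹) * ·) ⁻¹' (A ((a' * m) • (K : Set G)))) := by rw [hpre]
      _ = μ (A ((a' * m) • (K : Set G))) := measure_preimage_mul μ _ _
  have hμc : ∀ c ∈ C, μ c = μ (K : Set G) := fun c hc => by
    obtain ⟨a, ha, rfl⟩ := hCmem c hc
    exact MeasureTheory.measure_smul μ (a * m) (K : Set G)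
  have hSunion : S = ⋃ c ∈ C, c := by
    apply Subset.antisymm
    · intro x hx
      obtain ⟨c, hc, hxc⟩ := hCcover x hx
      exact mem_iUnion₂.mpr ⟨c, hc, hxc⟩
    · exact iUnion₂_subset hCsub
  have hbi : μ (⋃ c ∈ C, c) = ∑ c ∈ C, μ c := measure_biUnion_finset hCdisj hCmeas
  have hμS : μ S = C.card * μ (K : Set G) := by
    rw [hSunion, hbi, Finset.sum_congr rfl hμc, Finset.sum_const, nsmul_eq_mul]
  have hμK_sum : μ (K : Set G) = ∑ c ∈ C, μ (A c) := by
    rw [hKdecomp]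
    exact measure_biUnion_finset hAdisj hAmeas
  have hkey : ∀ c ∈ C, μ S * μ (A c) = μ (K : Set G) * μ (K : Set G) := by
    intro c hc
    have h5 : (C.card : ℝ≥0∞) * μ (A c) = μ (K : Set G) := by
      have h6 : ∑ c' ∈ C, μ (A c') = ∑ _c' ∈ C, μ (A c) :=
        Finset.sum_congr rfl fun c' hc' => hAeq c' hc' c hc
      rw [hμK_sum, h6, Finset.sum_const, nsmul_eq_mul]
    calc μ S * μ (A c) = μ (K : Set G) * ((C.card : ℝ≥0∞) * μ (A c)) := by
          rw [hμS]; ring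
      _ = μ (K : Set G) * μ (K : Set G) := by rw [h5]
  -- now the integral computations
  have hIntc : ∀ c ∈ C, IntegrableOn f c μ := fun c hc => hf.mono_set (hCsub c hc)
  have hintbi : ∫ x in ⋃ c ∈ C, c, f x ∂μ = ∑ c ∈ C, ∫ x in c, f x ∂μ :=
    integral_biUnion_finset C hCmeas hCdisj hIntc
  have hLHS : ∫ x in S, f x ∂μ = ∑ c ∈ C, ∫ x in c, f x ∂μ := by
    rw [hSunion, hintbi]
  set I : G → ℂ := fun x => ∫ z in (x * m) • (K : Set G), f z ∂μ with hI
  have hI_eval : ∀ x : G, ∫ y in (K : Set G), f (x * m * y) ∂μ = I x := by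
    intro x
    have h6 := (measurePreserving_mul_left μ (x * m)).setIntegral_preimage_emb
      (MeasurableEquiv.mulLeft (x * m)).measurableEmbedding f ((x * m) • (K : Set G))
    have h7 : ((x * m) * ·) ⁻¹' ((x * m) • (K : Set G)) = (K : Set G) := by
      ext y
      have h : m⁻¹ * x⁻¹ * (x * m * y) = y := by group
      simp [mem_smul_set_iff_inv_smul_mem, smul_eq_mul, h]
    rw [h7] at h6
    exact h6
  have hinner : ∀ x : G,
      ∫ k₂ : K, f (x * m * (k₂ : G)) ∂ν = (μ (K : Set G)).toReal⁻¹ • I x := by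
    intro x
    rw [hconv (fun y => f (x * m * y)), hI_eval x]
  have houter : ∫ k₁ : K, ∫ k₂ : K, f ((k₁ : G) * m * (k₂ : G)) ∂ν ∂ν
      = (μ (K : Set G)).toReal⁻¹ •
        ((μ (K : Set G)).toReal⁻¹ • ∫ x in (K : Set G), I x ∂μ) := by
    calc ∫ k₁ : K, ∫ k₂ : K, f ((k₁ : G) * m * (k₂ : G)) ∂ν ∂ν
        = ∫ k₁ : K, (μ (K : Set G)).toReal⁻¹ • I ((k₁ : G)) ∂ν := by
          exact integral_congr_ae (Filter.Eventually.of_forall fun k₁ => hinner _)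
      _ = (μ (K : Set G)).toReal⁻¹ • ∫ k₁ : K, I ((k₁ : G)) ∂ν := integral_smul _ _
      _ = (μ (K : Set G)).toReal⁻¹ •
            ((μ (K : Set G)).toReal⁻¹ • ∫ x in (K : Set G), I x ∂μ) := by rw [hconv I]
  have hIint : ∀ c ∈ C, ∀ x ∈ A c, I x = ∫ z in c, f z ∂μ := by
    intro c hc x hx
    obtain ⟨a, ha, hceq⟩ := hCmem c hc
    have hxc : x * m ∈ c := hx.2
    have h8 : (x * m) • (K : Set G) = c := by
      rw [hceq] at hxc ⊢
      exact coset_eq _ _ hxc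
    show (fun x => ∫ z in (x * m) • (K : Set G), f z ∂μ) x = _
    simp only
    rw [h8]
  have hIintegrable : ∀ c ∈ C, IntegrableOn I (A c) μ := by
    intro c hc
    have h9 : IntegrableOn (fun _ => ∫ z in c, f z ∂μ) (A c) μ := by
      apply (integrableOn_const_iff enorm_ne_top).mpr
      right
      exact lt_of_le_of_lt (measure_mono (hAsub c)) hKcompact.measure_lt_top
    exact IntegrableOn.congr_fun h9 (fun x hx => (hIint c hc x hx).symm) (hAmeas c hc)
  have hKint : ∫ x in (K : Set G), I x ∂μ
      = ∑ c ∈ C, (μ (A c)).toReal • ∫ z in c, f z ∂μ := by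
    rw [hKdecomp, integral_biUnion_finset C hAmeas hAdisj hIintegrable]
    refine Finset.sum_congr rfl fun c hc => ?_
    rw [setIntegral_congr_fun (hAmeas c hc) (fun x hx => hIint c hc x hx)]
    exact setIntegral_const _
  -- final assembly
  rw [hLHS, houter, hKint, Finset.smul_sum, Finset.smul_sum, Finset.mul_sum]
  refine Finset.sum_congr rfl fun c hc => ?_
  have hco : (μ S).toReal * (μ (A c)).toReal
      = (μ (K : Set G)).toReal * (μ (K : Set G)).toReal := by
    rw [← ENNReal.toReal_mul, ← ENNReal.toReal_mul, hkey c hc]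
  have hKne : (μ (K : Set G)).toReal ≠ 0 := ENNReal.toReal_ne_zero.mpr ⟨hK0, hKtop⟩
  simp only [smul_eq_mul, Complex.real_smul, Complex.ofReal_inv]
  have hcoC : ((μ S).toReal : ℂ) * ((μ (A c)).toReal : ℂ)
      = ((μ (K : Set G)).toReal : ℂ) * ((μ (K : Set G)).toReal : ℂ) := by
    exact_mod_cast congrArg Complex.ofReal hco
  have hKneC : ((μ (K : Set G)).toReal : ℂ) ≠ 0 := by exact_mod_cast hKne
  field_simp
  linear_combination (-(∫ z in c, f z ∂μ)) * hcoC
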